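/- For n ≥ 2, the number of Fishburn permutations of length n avoiding both classical patterns 321 and 2134 equals n² − 3n + 4. -/

import Mathlib

set_option maxHeartbeats 2000000
set_option maxRecDepth 100000

/-- A permutation `π` of `Fin n` contains the classical pattern `p` (given as a
function `Fin k → ℕ` listing the pattern's entries). -/
def Contains {n k : ℕ} (π : Equiv.Perm (Fin n)) (p : Fin k → ℕ) : Prop :=
  ∃ f : Fin k → Fin n, StrictMono f ∧ ∀ i j, p i < p j ↔ π (f i) < π (f j)

/-- Classical pattern avoidance. -/
def Avoids {n k : ℕ} (π : Equiv.Perm (Fin n)) (p : Fin k → ℕ) : Prop :=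
  ¬ Contains π p

/-- A permutation is Fishburn if there are no indices `i < j` with
`π i, π (i+1), π j` forming a 231 pattern and `π i = π j + 1`. -/
def IsFishburn {n : ℕ} (π : Equiv.Perm (Fin n)) : Prop :=
  ¬ ∃ (i j : ℕ) (hij : i + 1 < j) (hj : j < n),
      π ⟨i, by omega⟩ < π ⟨i + 1, by omega⟩ ∧
      π ⟨j, hj⟩ < π ⟨i, by omega⟩ ∧
      (π ⟨i, by omega⟩ : ℕ) = (π ⟨j, hj⟩ : ℕ) + 1

def validD (n i1 v1 i2 : ℕ) : Prop :=
  i1 + 2 ≤ i2 ∧ i2 + 2 ≤ n ∧ n ≤ v1 + 3 ∧ v1 + 2 ≤ n ∧ i1 < v1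

instance (n i1 v1 i2 : ℕ) : Decidable (validD n i1 v1 i2) := by unfold validD; infer_instance

def validS (n i v : ℕ) : Prop := i < v ∧ v < n ∧ n ≤ v + 2

instance (n i v : ℕ) : Decidable (validS n i v) := by unfold validS; infer_instance

def EDg (n i1 v1 i2 j : ℕ) : ℕ :=
  if validD n i1 v1 i2 then
    if j = i1 then v1 else if j = i2 then n - 1 else
    if j - (if i1 < j then 1 else 0) - (if i2 < j then 1 else 0) < v1 then
      j - (if i1 < j then 1 else 0) - (if i2 < j then 1 else 0)
    else j - (if i1 < j then 1 else 0) - (if i2 < j then 1 else 0) + 1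
  else j

def EDIg (n i1 v1 i2 u : ℕ) : ℕ :=
  if validD n i1 v1 i2 then
    if u = v1 then i1 else if u = n - 1 then i2 else
    if (if u < v1 then u else u - 1) < i1 then (if u < v1 then u else u - 1)
    else if (if u < v1 then u else u - 1) + 1 < i2 then (if u < v1 then u else u - 1) + 1
    else (if u < v1 then u else u - 1) + 2
  else u

def ESg (n i v j : ℕ) : ℕ :=
  if validS n i v then
    if j = i then v else
    if j - (if i < j then 1 else 0) < v then j - (if i < j then 1 else 0)
    else j - (if i < j then 1 else 0) + 1
  else j

def ESIg (n i v u : ℕ) : ℕ :=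
  if validS n i v then
    if u = v then i else
    if (if u < v then u else u - 1) < i then (if u < v then u else u - 1)
    else (if u < v then u else u - 1) + 1
  else u

lemma EDg_spec (n i1 v1 i2 j : ℕ) (hv : validD n i1 v1 i2) (hj : j < n) :
    (j = i1 ∧ EDg n i1 v1 i2 j = v1) ∨ (j = i2 ∧ EDg n i1 v1 i2 j = n - 1) ∨
    (j ≠ i1 ∧ j ≠ i2 ∧
      ((j < i1 ∧ ((j < v1 ∧ EDg n i1 v1 i2 j = j) ∨ (v1 ≤ j ∧ EDg n i1 v1 i2 j = j + 1))) ∨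
       (i1 < j ∧ j < i2 ∧ ((j - 1 < v1 ∧ EDg n i1 v1 i2 j = j - 1) ∨ (v1 ≤ j - 1 ∧ EDg n i1 v1 i2 j = j))) ∨
       (i2 < j ∧ ((j - 2 < v1 ∧ EDg n i1 v1 i2 j = j - 2) ∨ (v1 ≤ j - 2 ∧ EDg n i1 v1 i2 j = j - 1))))) := by
  obtain ⟨h1, h2, h3, h4, h5⟩ := hv
  rw [EDg, if_pos ⟨h1, h2, h3, h4, h5⟩]
  split_ifs <;> omega

lemma EDIg_spec (n i1 v1 i2 u : ℕ) (hv : validD n i1 v1 i2) (hu : u < n)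
    (h1 : u ≠ v1) (h2 : u ≠ n - 1) :
    (u < v1 ∧ ((u < i1 ∧ EDIg n i1 v1 i2 u = u) ∨
               (i1 ≤ u ∧ u + 1 < i2 ∧ EDIg n i1 v1 i2 u = u + 1) ∨
               (i1 ≤ u ∧ i2 ≤ u + 1 ∧ EDIg n i1 v1 i2 u = u + 2))) ∨
    (v1 < u ∧ ((u - 1 < i1 ∧ EDIg n i1 v1 i2 u = u - 1) ∨
               (i1 ≤ u - 1 ∧ u < i2 ∧ EDIg n i1 v1 i2 u = u) ∨
               (i1 ≤ u - 1 ∧ i2 ≤ u ∧ EDIg n i1 v1 i2 u = u + 1))) := by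
  obtain ⟨g1, g2, g3, g4, g5⟩ := hv
  rw [EDIg, if_pos ⟨g1, g2, g3, g4, g5⟩]
  split_ifs <;> omega

lemma EDg_EDIg (n i1 v1 i2 u : ℕ) (hu : u < n) :
    EDg n i1 v1 i2 (EDIg n i1 v1 i2 u) = u := by
  by_cases hv : validD n i1 v1 i2
  · obtain ⟨h1, h2, h3, h4, h5⟩ := hv
    rw [EDIg, if_pos ⟨h1, h2, h3, h4, h5⟩]
    split_ifs <;> (rw [EDg, if_pos ⟨h1, h2, h3, h4, h5⟩]; split_ifs <;> omega)
  · rw [EDIg, if_neg hv, EDg, if_neg hv]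

lemma EDIg_EDg (n i1 v1 i2 j : ℕ) (hj : j < n) :
    EDIg n i1 v1 i2 (EDg n i1 v1 i2 j) = j := by
  by_cases hv : validD n i1 v1 i2
  · obtain ⟨h1, h2, h3, h4, h5⟩ := hv
    rw [EDg, if_pos ⟨h1, h2, h3, h4, h5⟩]
    split_ifs <;> (rw [EDIg, if_pos ⟨h1, h2, h3, h4, h5⟩]; split_ifs <;> omega)
  · rw [EDg, if_neg hv, EDIg, if_neg hv]

lemma EDg_lt (n i1 v1 i2 j : ℕ) (hj : j < n) : EDg n i1 v1 i2 j < n := by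
  by_cases hv : validD n i1 v1 i2
  · obtain ⟨h1, h2, h3, h4, h5⟩ := hv
    rw [EDg, if_pos ⟨h1, h2, h3, h4, h5⟩]; split_ifs <;> omega
  · rw [EDg, if_neg hv]; exact hj

lemma EDIg_lt (n i1 v1 i2 u : ℕ) (hu : u < n) : EDIg n i1 v1 i2 u < n := by
  by_cases hv : validD n i1 v1 i2
  · obtain ⟨h1, h2, h3, h4, h5⟩ := hv
    rw [EDIg, if_pos ⟨h1, h2, h3, h4, h5⟩]; split_ifs <;> omega
  · rw [EDIg, if_neg hv]; exact hu

lemma ESg_spec (n i v j : ℕ) (hv : validS n i v) (hj : j < n) :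
    (j = i ∧ ESg n i v j = v) ∨
    (j ≠ i ∧
      ((j < i ∧ ((j < v ∧ ESg n i v j = j) ∨ (v ≤ j ∧ ESg n i v j = j + 1))) ∨
       (i < j ∧ ((j - 1 < v ∧ ESg n i v j = j - 1) ∨ (v ≤ j - 1 ∧ ESg n i v j = j))))) := by
  obtain ⟨h1, h2, h3⟩ := hv
  rw [ESg, if_pos ⟨h1, h2, h3⟩]
  split_ifs <;> omega

lemma ESIg_spec (n i v u : ℕ) (hv : validS n i v) (hu : u < n) (h1 : u ≠ v) :
    (u < v ∧ ((u < i ∧ ESIg n i v u = u) ∨ (i ≤ u ∧ ESIg n i v u = u + 1))) ∨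
    (v < u ∧ ((u - 1 < i ∧ ESIg n i v u = u - 1) ∨ (i ≤ u - 1 ∧ ESIg n i v u = u))) := by
  obtain ⟨g1, g2, g3⟩ := hv
  rw [ESIg, if_pos ⟨g1, g2, g3⟩]
  split_ifs <;> omega

lemma ESg_ESIg (n i v u : ℕ) (hu : u < n) : ESg n i v (ESIg n i v u) = u := by
  by_cases hv : validS n i v
  · obtain ⟨h1, h2, h3⟩ := hv
    rw [ESIg, if_pos ⟨h1, h2, h3⟩]
    split_ifs <;> (rw [ESg, if_pos ⟨h1, h2, h3⟩]; split_ifs <;> omega)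
  · rw [ESIg, if_neg hv, ESg, if_neg hv]

lemma ESIg_ESg (n i v j : ℕ) (hj : j < n) : ESIg n i v (ESg n i v j) = j := by
  by_cases hv : validS n i v
  · obtain ⟨h1, h2, h3⟩ := hv
    rw [ESg, if_pos ⟨h1, h2, h3⟩]
    split_ifs <;> (rw [ESIg, if_pos ⟨h1, h2, h3⟩]; split_ifs <;> omega)
  · rw [ESg, if_neg hv, ESIg, if_neg hv]

lemma ESg_lt (n i v j : ℕ) (hj : j < n) : ESg n i v j < n := by
  by_cases hv : validS n i v
  · obtain ⟨h1, h2, h3⟩ := hv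
    rw [ESg, if_pos ⟨h1, h2, h3⟩]; split_ifs <;> omega
  · rw [ESg, if_neg hv]; exact hj

lemma ESIg_lt (n i v u : ℕ) (hu : u < n) : ESIg n i v u < n := by
  by_cases hv : validS n i v
  · obtain ⟨h1, h2, h3⟩ := hv
    rw [ESIg, if_pos ⟨h1, h2, h3⟩]; split_ifs <;> omega
  · rw [ESIg, if_neg hv]; exact hu

def permD (n i1 v1 i2 : ℕ) : Equiv.Perm (Fin n) where
  toFun j := ⟨EDg n i1 v1 i2 j, EDg_lt n i1 v1 i2 j j.isLt⟩
  invFun u := ⟨EDIg n i1 v1 i2 u, EDIg_lt n i1 v1 i2 u u.isLt⟩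
  left_inv j := Fin.ext (EDIg_EDg n i1 v1 i2 j j.isLt)
  right_inv u := Fin.ext (EDg_EDIg n i1 v1 i2 u u.isLt)

def permS (n i v : ℕ) : Equiv.Perm (Fin n) where
  toFun j := ⟨ESg n i v j, ESg_lt n i v j j.isLt⟩
  invFun u := ⟨ESIg n i v u, ESIg_lt n i v u u.isLt⟩
  left_inv j := Fin.ext (ESIg_ESg n i v j j.isLt)
  right_inv u := Fin.ext (ESg_ESIg n i v u u.isLt)

lemma permD_val (n i1 v1 i2 : ℕ) (j : Fin n) : (permD n i1 v1 i2 j : ℕ) = EDg n i1 v1 i2 j := rfl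
lemma permS_val (n i v : ℕ) (j : Fin n) : (permS n i v j : ℕ) = ESg n i v j := rfl

-- soundness arithmetic lemmas
lemma EDg_no321 (n i1 v1 i2 a b c : ℕ) (hv : validD n i1 v1 i2)
    (hab : a < b) (hbc : b < c) (hc : c < n) :
    ¬(EDg n i1 v1 i2 c < EDg n i1 v1 i2 b ∧ EDg n i1 v1 i2 b < EDg n i1 v1 i2 a) := by
  have ha := EDg_spec n i1 v1 i2 a hv (by omega)
  have hb := EDg_spec n i1 v1 i2 b hv (by omega)
  have hc' := EDg_spec n i1 v1 i2 c hv hc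
  have := hv; obtain ⟨h1, h2, h3, h4, h5⟩ := this
  omega

lemma EDg_no2134 (n i1 v1 i2 a b c d : ℕ) (hv : validD n i1 v1 i2)
    (hab : a < b) (hbc : b < c) (hcd : c < d) (hd : d < n) :
    ¬(EDg n i1 v1 i2 b < EDg n i1 v1 i2 a ∧ EDg n i1 v1 i2 a < EDg n i1 v1 i2 c ∧
      EDg n i1 v1 i2 c < EDg n i1 v1 i2 d) := by
  have ha := EDg_spec n i1 v1 i2 a hv (by omega)
  have hb := EDg_spec n i1 v1 i2 b hv (by omega)
  have hc' := EDg_spec n i1 v1 i2 c hv (by omega)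
  have hd' := EDg_spec n i1 v1 i2 d hv hd
  have := hv; obtain ⟨h1, h2, h3, h4, h5⟩ := this
  omega

lemma EDg_fish (n i1 v1 i2 a b : ℕ) (hv : validD n i1 v1 i2)
    (hab : a + 1 < b) (hb : b < n) :
    ¬(EDg n i1 v1 i2 a < EDg n i1 v1 i2 (a + 1) ∧ EDg n i1 v1 i2 b < EDg n i1 v1 i2 a ∧
      EDg n i1 v1 i2 a = EDg n i1 v1 i2 b + 1) := by
  have ha := EDg_spec n i1 v1 i2 a hv (by omega)
  have ha1 := EDg_spec n i1 v1 i2 (a + 1) hv (by omega)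
  have hb' := EDg_spec n i1 v1 i2 b hv hb
  have := hv; obtain ⟨h1, h2, h3, h4, h5⟩ := this
  omega

lemma ESg_no321 (n i v a b c : ℕ) (hv : validS n i v)
    (hab : a < b) (hbc : b < c) (hc : c < n) :
    ¬(ESg n i v c < ESg n i v b ∧ ESg n i v b < ESg n i v a) := by
  have ha := ESg_spec n i v a hv (by omega)
  have hb := ESg_spec n i v b hv (by omega)
  have hc' := ESg_spec n i v c hv hc
  have := hv; obtain ⟨h1, h2, h3⟩ := this
  omega

lemma ESg_no2134 (n i v a b c d : ℕ) (hv : validS n i v)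
    (hab : a < b) (hbc : b < c) (hcd : c < d) (hd : d < n) :
    ¬(ESg n i v b < ESg n i v a ∧ ESg n i v a < ESg n i v c ∧ ESg n i v c < ESg n i v d) := by
  have ha := ESg_spec n i v a hv (by omega)
  have hb := ESg_spec n i v b hv (by omega)
  have hc' := ESg_spec n i v c hv (by omega)
  have hd' := ESg_spec n i v d hv hd
  have := hv; obtain ⟨h1, h2, h3⟩ := this
  omega

lemma ESg_fish (n i v a b : ℕ) (hv : validS n i v) (hab : a + 1 < b) (hb : b < n) :
    ¬(ESg n i v a < ESg n i v (a + 1) ∧ ESg n i v b < ESg n i v a ∧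
      ESg n i v a = ESg n i v b + 1) := by
  have ha := ESg_spec n i v a hv (by omega)
  have ha1 := ESg_spec n i v (a + 1) hv (by omega)
  have hb' := ESg_spec n i v b hv hb
  have := hv; obtain ⟨h1, h2, h3⟩ := this
  omega

lemma avoids321_iff {n : ℕ} (π : Equiv.Perm (Fin n)) :
    Avoids π ![3, 2, 1] ↔ ∀ a b c : Fin n, a < b → b < c → ¬(π c < π b ∧ π b < π a) := by
  constructor
  · intro hA a b c hab hbc ⟨h1, h2⟩
    apply hA
    have hac : a < c := hab.trans hbc
    have g1 : (π c) < (π b) := h1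
    have g2 : (π b) < (π a) := h2
    have g3 : (π c) < (π a) := g1.trans g2
    refine ⟨![a, b, c], ?_, ?_⟩
    · intro x y hxy
      fin_cases x <;> fin_cases y <;>
        first
          | exact absurd hxy (by decide)
          | exact hab | exact hbc | exact hac
    · intro x y
      fin_cases x <;> fin_cases y <;> constructor <;> intro h <;>
        first
          | exact g1 | exact g2 | exact g3
          | decide
          | exact absurd h (by decide)
          | exact absurd h (not_lt.mpr g1.le)
          | exact absurd h (not_lt.mpr g2.le)
          | exact absurd h (not_lt.mpr g3.le)
          | exact absurd h (lt_irrefl _)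
  · intro h ⟨f, hf, hiff⟩
    exact h (f 0) (f 1) (f 2) (hf (by decide)) (hf (by decide))
      ⟨(hiff 2 1).mp (by decide), (hiff 1 0).mp (by decide)⟩

lemma avoids2134_iff {n : ℕ} (π : Equiv.Perm (Fin n)) :
    Avoids π ![2, 1, 3, 4] ↔
      ∀ a b c d : Fin n, a < b → b < c → c < d →
        ¬(π b < π a ∧ π a < π c ∧ π c < π d) := by
  constructor
  · intro hA a b c d hab hbc hcd ⟨h1, h2, h3⟩
    apply hA
    have hac : a < c := hab.trans hbc
    have had : a < d := hac.trans hcd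
    have hbd : b < d := hbc.trans hcd
    have gba : (π b) < (π a) := h1
    have gac : (π a) < (π c) := h2
    have gcd : (π c) < (π d) := h3
    have gbc : (π b) < (π c) := gba.trans gac
    have gad : (π a) < (π d) := gac.trans gcd
    have gbd : (π b) < (π d) := gbc.trans gcd
    refine ⟨![a, b, c, d], ?_, ?_⟩
    · intro x y hxy
      fin_cases x <;> fin_cases y <;>
        first
          | exact absurd hxy (by decide)
          | exact hab | exact hbc | exact hcd | exact hac | exact had | exact hbd
    · intro x y
      fin_cases x <;> fin_cases y <;> constructor <;> intro h <;>
        first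
          | exact gba | exact gac | exact gcd | exact gbc | exact gad | exact gbd
          | decide
          | exact absurd h (by decide)
          | exact absurd h (not_lt.mpr gba.le)
          | exact absurd h (not_lt.mpr gac.le)
          | exact absurd h (not_lt.mpr gcd.le)
          | exact absurd h (not_lt.mpr gbc.le)
          | exact absurd h (not_lt.mpr gad.le)
          | exact absurd h (not_lt.mpr gbd.le)
          | exact absurd h (lt_irrefl _)
  · intro h ⟨f, hf, hiff⟩
    exact h (f 0) (f 1) (f 2) (f 3) (hf (by decide)) (hf (by decide)) (hf (by decide))
      ⟨(hiff 1 0).mp (by decide), (hiff 0 2).mp (by decide), (hiff 2 3).mp (by decide)⟩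

open Finset

lemma nonexc_mono {n : ℕ} (π : Equiv.Perm (Fin n))
    (h321 : ∀ a b c : Fin n, a < b → b < c → ¬(π c < π b ∧ π b < π a))
    (a b : Fin n) (hab : a < b) (ha : (π a : ℕ) ≤ a) (hb : (π b : ℕ) ≤ b) :
    (π a : ℕ) < (π b : ℕ) := by
  by_contra hc
  have hvne : (π a : ℕ) ≠ (π b : ℕ) := fun h => absurd (π.injective (Fin.ext h)) (Fin.ne_of_lt hab)
  have hba : π b < π a := by rw [Fin.lt_def]; omega
  by_cases hm : ∃ m, m < a ∧ π a < π m
  · obtain ⟨m, hm1, hm2⟩ := hm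
    exact h321 m a b hm1 hab ⟨hba, hm2⟩
  · push_neg at hm
    have hsub : (Finset.Iic a).image π ⊆ Finset.Iic (π a) := by
      intro u hu
      rw [Finset.mem_image] at hu
      obtain ⟨m, hm', rfl⟩ := hu
      rw [Finset.mem_Iic] at hm' ⊢
      rcases eq_or_lt_of_le hm' with h | h
      · subst h; exact le_refl _
      · exact hm m h
    have hcard : (a : ℕ) + 1 ≤ (π a : ℕ) + 1 := by
      have h1 := Finset.card_le_card hsub
      rwa [Finset.card_image_of_injective _ π.injective, Fin.card_Iic, Fin.card_Iic] at h1
    have heq : (Finset.Iic a).image π = Finset.Iic (π a) := by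
      apply Finset.eq_of_subset_of_card_le hsub
      rw [Finset.card_image_of_injective _ π.injective, Fin.card_Iic, Fin.card_Iic]
      omega
    have hmem : π b ∈ Finset.Iic (π a) := by rw [Finset.mem_Iic]; exact le_of_lt hba
    rw [← heq, Finset.mem_image] at hmem
    obtain ⟨m, hm', he⟩ := hmem
    rw [Finset.mem_Iic] at hm'
    have : m = b := π.injective he
    subst this
    exact absurd hab (by rw [Fin.lt_def]; omega)

lemma exc_mono {n : ℕ} (π : Equiv.Perm (Fin n))
    (h321 : ∀ a b c : Fin n, a < b → b < c → ¬(π c < π b ∧ π b < π a))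
    (a b : Fin n) (hab : a < b) (ha : (a : ℕ) < π a) (hb : (b : ℕ) < π b) :
    (π a : ℕ) < (π b : ℕ) := by
  by_contra hc
  have hvne : (π a : ℕ) ≠ (π b : ℕ) := fun h => absurd (π.injective (Fin.ext h)) (Fin.ne_of_lt hab)
  have hba : π b < π a := by rw [Fin.lt_def]; omega
  by_cases hm : ∃ m, b < m ∧ π m < π b
  · obtain ⟨m, hm1, hm2⟩ := hm
    exact h321 a b m hab hm1 ⟨hm2, hba⟩
  · push_neg at hm
    have hsub : Finset.Iic (π b) ⊆ (Finset.Iic b).image π := by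
      intro u hu
      rw [Finset.mem_Iic] at hu
      rw [Finset.mem_image]
      refine ⟨π.symm u, ?_, π.apply_symm_apply u⟩
      rw [Finset.mem_Iic]
      by_contra hgt
      push_neg at hgt
      have h1 := hm _ hgt
      rw [π.apply_symm_apply] at h1
      have : u = π b := le_antisymm hu h1
      subst this
      have : π.symm (π b) = b := π.symm_apply_apply b
      rw [this] at hgt
      exact absurd hgt (lt_irrefl _)
    have h1 := Finset.card_le_card hsub
    rw [Finset.card_image_of_injective _ π.injective, Fin.card_Iic, Fin.card_Iic] at h1
    omega

lemma ESg_at {n i v : ℕ} (hv : validS n i v) (hi : i < n) : ESg n i v i = v := by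
  have := ESg_spec n i v i hv hi
  omega

lemma ESg_facts {n i v m : ℕ} (hv : validS n i v) (hm : m < n) (hne : m ≠ i) :
    ESg n i v m ≤ m ∧ ESg n i v m ≠ v := by
  have := ESg_spec n i v m hv hm
  obtain ⟨h1, h2, h3⟩ := hv
  omega

lemma ESIg_lt_m {n i v m u : ℕ} (hv : validS n i v) (hm : m < n) (hne : m ≠ i)
    (hu : u < ESg n i v m) (hune : u ≠ v) : ESIg n i v u < m := by
  have h1 := ESg_spec n i v m hv hm
  have hun : u < n := lt_trans (lt_of_lt_of_le hu (ESg_facts hv hm hne).1) hm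
  have h2 := ESIg_spec n i v u hv hun hune
  obtain ⟨g1, g2, g3⟩ := hv
  omega

lemma EDg_at1 {n i1 v1 i2 : ℕ} (hv : validD n i1 v1 i2) (hi : i1 < n) :
    EDg n i1 v1 i2 i1 = v1 := by
  have := EDg_spec n i1 v1 i2 i1 hv hi
  obtain ⟨h1, h2, h3, h4, h5⟩ := hv
  omega

lemma EDg_at2 {n i1 v1 i2 : ℕ} (hv : validD n i1 v1 i2) (hi : i2 < n) :
    EDg n i1 v1 i2 i2 = n - 1 := by
  have := EDg_spec n i1 v1 i2 i2 hv hi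
  obtain ⟨h1, h2, h3, h4, h5⟩ := hv
  omega

lemma EDg_facts {n i1 v1 i2 m : ℕ} (hv : validD n i1 v1 i2) (hm : m < n)
    (h1 : m ≠ i1) (h2 : m ≠ i2) :
    EDg n i1 v1 i2 m ≤ m ∧ EDg n i1 v1 i2 m ≠ v1 ∧ EDg n i1 v1 i2 m ≠ n - 1 := by
  have := EDg_spec n i1 v1 i2 m hv hm
  obtain ⟨g1, g2, g3, g4, g5⟩ := hv
  omega

lemma EDIg_lt_m {n i1 v1 i2 m u : ℕ} (hv : validD n i1 v1 i2) (hm : m < n)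
    (h1 : m ≠ i1) (h2 : m ≠ i2) (hu : u < EDg n i1 v1 i2 m) (hu1 : u ≠ v1) (hu2 : u ≠ n - 1) :
    EDIg n i1 v1 i2 u < m := by
  have s1 := EDg_spec n i1 v1 i2 m hv hm
  have hun : u < n := lt_trans (lt_of_lt_of_le hu (EDg_facts hv hm h1 h2).1) hm
  have s2 := EDIg_spec n i1 v1 i2 u hv hun hu1 hu2
  obtain ⟨g1, g2, g3, g4, g5⟩ := hv
  omega

lemma isFishburn_iff {n : ℕ} (π : Equiv.Perm (Fin n)) :
    IsFishburn π ↔ ∀ a a' b : Fin n, (a' : ℕ) = (a : ℕ) + 1 → (a : ℕ) + 1 < (b : ℕ) →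
      ¬(π a < π a' ∧ π b < π a ∧ (π a : ℕ) = (π b : ℕ) + 1) := by
  constructor
  · intro hf a a' b ha' hab ⟨c1, c2, c3⟩
    apply hf
    refine ⟨(a : ℕ), (b : ℕ), hab, b.isLt, ?_, ?_, ?_⟩
    · simp only [← ha', Fin.eta]; exact c1
    · simp only [Fin.eta]; exact c2
    · simp only [Fin.eta]; exact c3
  · intro h ⟨i, j, hij, hj, c1, c2, c3⟩
    exact h ⟨i, by omega⟩ ⟨i + 1, by omega⟩ ⟨j, hj⟩ rfl hij ⟨c1, c2, c3⟩

theorem completeness (n : ℕ) (hn : 2 ≤ n) (π : Equiv.Perm (Fin n))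
    (h321 : ∀ a b c : Fin n, a < b → b < c → ¬(π c < π b ∧ π b < π a))
    (h2134 : ∀ a b c d : Fin n, a < b → b < c → c < d → ¬(π b < π a ∧ π a < π c ∧ π c < π d))
    (hfish : IsFishburn π) :
    π = 1 ∨ (∃ i v, validS n i v ∧ π = permS n i v) ∨
      (∃ i1 v1 i2, validD n i1 v1 i2 ∧ π = permD n i1 v1 i2) := by
  by_cases h0 : ∀ j : Fin n, (π j : ℕ) ≤ (j : ℕ)
  · -- identity
    left
    have fill : ∀ m, ∀ hm : m < n, (π ⟨m, hm⟩ : ℕ) = m := by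
      intro m
      induction m using Nat.strong_induction_on with
      | _ m IH =>
        intro hm
        have h1 : (π ⟨m, hm⟩ : ℕ) ≤ m := h0 ⟨m, hm⟩
        rcases eq_or_lt_of_le h1 with h | h
        · exact h
        · exfalso
          have h2 := IH _ h (lt_trans h hm)
          have h3 := π.injective (Fin.ext h2)
          rw [Fin.mk.injEq] at h3
          omega
    apply Equiv.ext; intro j
    apply Fin.ext
    have := fill j.val j.isLt
    rwa [Fin.eta] at this
  · push_neg at h0
    have hExc : (Finset.univ.filter (fun j : Fin n => (j : ℕ) < π j)).Nonempty := by
      obtain ⟨j, hj⟩ := h0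
      exact ⟨j, by simp; omega⟩
    set i1 : Fin n := _root_.Finset.min' _ hExc with hi1def
    have hi1mem : i1 ∈ Finset.univ.filter (fun j : Fin n => (j : ℕ) < π j) :=
      Finset.min'_mem _ hExc
    have hi1 : (i1 : ℕ) < π i1 := by simpa using hi1mem
    have hi1min : ∀ j : Fin n, (j : ℕ) < π j → i1 ≤ j := by
      intro j hj
      exact Finset.min'_le _ _ (by simp; omega)
    by_cases hone : ∀ j : Fin n, (j : ℕ) < π j → j = i1
    · -- single-excedance case
      right; left
      set v : ℕ := (π i1 : ℕ) with hvdef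
      have nonexc : ∀ j : Fin n, j ≠ i1 → (π j : ℕ) ≤ j := by
        intro j hj
        by_contra h
        exact hj (hone j (by omega))
      have hvn : v < n := (π i1).isLt
      -- v ≥ n - 2
      have hv2 : n ≤ v + 2 := by
        by_contra hcon
        push_neg at hcon
        set c : Fin n := π.symm ⟨v + 1, by omega⟩ with hcdef
        set d : Fin n := π.symm ⟨v + 2, by omega⟩ with hddef
        have hπc : (π c : ℕ) = v + 1 := by rw [hcdef, π.apply_symm_apply]
        have hπd : (π d : ℕ) = v + 2 := by rw [hddef, π.apply_symm_apply]
        have hcne : c ≠ i1 := fun h => by rw [h] at hπc; omega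
        have hdne : d ≠ i1 := fun h => by rw [h] at hπd; omega
        have hc1 : v + 1 ≤ (c : ℕ) := by have := nonexc c hcne; omega
        have hd1 : v + 2 ≤ (d : ℕ) := by have := nonexc d hdne; omega
        have hcd : c < d := by
          rcases lt_trichotomy c d with h | h | h
          · exact h
          · exfalso; rw [h] at hπc; omega
          · exfalso
            have := nonexc_mono π h321 d c h (by omega) (by omega)
            omega
        have hbn : (i1 : ℕ) + 1 < n := by omega
        set b : Fin n := ⟨(i1 : ℕ) + 1, hbn⟩ with hbdef
        have hbne : b ≠ i1 := by
          intro h; have := congrArg Fin.val h; simp [hbdef] at this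
        have hπb : (π b : ℕ) ≤ (i1 : ℕ) + 1 := nonexc b hbne
        have hπbv : (π b : ℕ) ≠ v := by
          intro h
          exact hbne (π.injective (Fin.ext (by omega)))
        have h1b : i1 < b := by rw [Fin.lt_def]; simp [hbdef]
        have hbc : b < c := by rw [Fin.lt_def]; simp [hbdef]; omega
        exact h2134 i1 b c d h1b hbc hcd
          ⟨by rw [Fin.lt_def]; omega, by rw [Fin.lt_def]; omega, by rw [Fin.lt_def]; omega⟩
      have hvS : validS n (i1 : ℕ) v := ⟨hi1, hvn, hv2⟩
      -- fill-in
      have fill : ∀ m, ∀ hm : m < n, (π ⟨m, hm⟩ : ℕ) = ESg n (i1 : ℕ) v m := by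
        intro m
        induction m using Nat.strong_induction_on with
        | _ m IH =>
          intro hm
          by_cases hmi : m = (i1 : ℕ)
          · subst hmi
            rw [ESg_at hvS hm]
          · have hjne : (⟨m, hm⟩ : Fin n) ≠ i1 := by
              intro h; exact hmi (congrArg Fin.val h)
            have hπj : (π ⟨m, hm⟩ : ℕ) ≤ m := nonexc _ hjne
            have hE := ESg_facts hvS hm hmi
            -- lower bound
            have hge : ESg n (i1 : ℕ) v m ≤ (π ⟨m, hm⟩ : ℕ) := by
              by_contra hcon
              push_neg at hcon
              set u : ℕ := (π ⟨m, hm⟩ : ℕ) with hudef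
              have hune : u ≠ v := by
                intro h
                exact hjne (π.injective (Fin.ext (by omega)))
              have hkm : ESIg n (i1 : ℕ) v u < m := ESIg_lt_m hvS hm hmi hcon hune
              have hun : u < n := by omega
              have hk : ESg n (i1 : ℕ) v (ESIg n (i1 : ℕ) v u) = u := ESg_ESIg n _ v u hun
              have hkn : ESIg n (i1 : ℕ) v u < n := ESIg_lt n _ v u hun
              have hIH := IH _ hkm hkn
              rw [hk] at hIH
              have h5 := π.injective (Fin.ext (hIH.trans hudef))
              have h6 := congrArg Fin.val h5
              simp only [] at h6
              omega
            -- upper bound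
            rcases eq_or_lt_of_le hge with h | h
            · exact h.symm
            · exfalso
              set e : ℕ := ESg n (i1 : ℕ) v m with hedef
              have hen : e < n := by omega
              set q : Fin n := π.symm ⟨e, hen⟩ with hqdef
              have hπq : (π q : ℕ) = e := by rw [hqdef, π.apply_symm_apply]
              have hqne : q ≠ ⟨m, hm⟩ := by
                intro hqe; rw [hqe] at hπq; omega
              have hqv : (q : ℕ) ≠ m := fun hq => hqne (Fin.ext hq)
              rcases lt_or_gt_of_ne hqv with hq | hq
              · have hIH := IH _ hq q.isLt
                rw [Fin.eta] at hIH
                have hBe : ESg n (i1 : ℕ) v (q : ℕ) = e := by omega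
                have e1 := ESIg_ESg n (i1 : ℕ) v (q : ℕ) q.isLt
                have e2 := ESIg_ESg n (i1 : ℕ) v m hm
                rw [hBe] at e1
                rw [← hedef] at e2
                omega
              · have hqi : q ≠ i1 := by
                  intro hqe
                  rw [hqe] at hπq
                  omega
                have hπq2 : (π q : ℕ) ≤ q := nonexc q hqi
                have := nonexc_mono π h321 ⟨m, hm⟩ q (by simp only [Fin.lt_def, Fin.val_mk]; exact hq) hπj hπq2
                omega
      refine ⟨(i1 : ℕ), v, hvS, ?_⟩
      apply Equiv.ext; intro j
      apply Fin.ext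
      have := fill j.val j.isLt
      rw [Fin.eta] at this
      rw [this, permS_val]
    · -- double-excedance case
      right; right
      push_neg at hone
      obtain ⟨j0, hj0exc, hj0ne⟩ := hone
      have hF2 : (Finset.univ.filter (fun j : Fin n => (j : ℕ) < π j ∧ j ≠ i1)).Nonempty :=
        ⟨j0, by simp [hj0ne]; omega⟩
      set i2 : Fin n := _root_.Finset.min' _ hF2 with hi2def
      have hi2mem := Finset.min'_mem _ hF2
      rw [← hi2def] at hi2mem
      have hi2' : (i2 : ℕ) < π i2 ∧ i2 ≠ i1 := by simpa using hi2mem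
      have hi2 : (i2 : ℕ) < π i2 := hi2'.1
      have hi2min : ∀ j : Fin n, (j : ℕ) < π j → j ≠ i1 → i2 ≤ j := by
        intro j h1 h2
        exact Finset.min'_le _ _ (by simp [h2]; omega)
      have h12 : i1 < i2 := lt_of_le_of_ne (hi1min i2 hi2) (fun h => hi2'.2 h.symm)
      have h12v : (i1 : ℕ) < (i2 : ℕ) := Fin.lt_def.mp h12
      set v1 : ℕ := (π i1 : ℕ) with hv1def
      set v2 : ℕ := (π i2 : ℕ) with hv2def
      have hord : v1 < v2 := exc_mono π h321 i1 i2 h12 hi1 hi2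
      have hv2n : v2 < n := (π i2).isLt
      -- i1 + 1 < i2
      have hgap : (i1 : ℕ) + 1 < (i2 : ℕ) := by
        by_contra hcon
        push_neg at hcon
        have hi2v : (i2 : ℕ) = (i1 : ℕ) + 1 := by omega
        have hv1pos : 1 ≤ v1 := by omega
        set s : Fin n := π.symm ⟨v1 - 1, by omega⟩ with hsdef
        have hπs : (π s : ℕ) = v1 - 1 := by rw [hsdef, π.apply_symm_apply]
        have hsne1 : s ≠ i1 := fun h => by rw [h] at hπs; omega
        have hsne2 : s ≠ i2 := fun h => by rw [h] at hπs; omega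
        have hsv1 : (s : ℕ) ≠ (i1 : ℕ) := fun h => hsne1 (Fin.ext h)
        have hsv2 : (s : ℕ) ≠ (i2 : ℕ) := fun h => hsne2 (Fin.ext h)
        have hsgt : (i1 : ℕ) < (s : ℕ) := by
          by_contra hlt
          push_neg at hlt
          have hexc : (s : ℕ) < π s := by omega
          have := Fin.le_def.mp (hi1min s hexc)
          omega
        exact (isFishburn_iff π).mp hfish i1 i2 s hi2v (by omega)
          ⟨Fin.lt_def.mpr (by omega), Fin.lt_def.mpr (by omega), by omega⟩
      -- no third excedance
      have nonexc : ∀ j : Fin n, j ≠ i1 → j ≠ i2 → (π j : ℕ) ≤ j := by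
        intro j hne1 hne2
        by_contra hcon
        push_neg at hcon
        have hji2 : i2 < j := lt_of_le_of_ne (hi2min j hcon hne1) (fun h => hne2 h.symm)
        have hb : (i1 : ℕ) + 1 < n := by omega
        set b : Fin n := ⟨(i1 : ℕ) + 1, hb⟩ with hbdef
        have hbv : (b : ℕ) = (i1 : ℕ) + 1 := rfl
        have hbne1 : b ≠ i1 := fun h => by
          have := congrArg Fin.val h; rw [hbv] at this; omega
        have hbne2 : b ≠ i2 := fun h => by
          have := congrArg Fin.val h; rw [hbv] at this; omega
        have hπb : (π b : ℕ) ≤ (i1 : ℕ) + 1 := by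
          by_contra hc2
          push_neg at hc2
          have hexc : (b : ℕ) < π b := by omega
          have := Fin.le_def.mp (hi2min b hexc hbne1)
          omega
        have hπbv : (π b : ℕ) ≠ v1 := fun h => hbne1 (π.injective (Fin.ext h))
        have hπj2 : (π i2 : ℕ) < (π j : ℕ) := exc_mono π h321 i2 j hji2 hi2 hcon
        exact h2134 i1 b i2 j (Fin.lt_def.mpr (by omega)) (Fin.lt_def.mpr (by omega)) hji2
          ⟨Fin.lt_def.mpr (by omega), Fin.lt_def.mpr (by omega), Fin.lt_def.mpr (by omega)⟩
      -- v2 = n - 1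
      have hv2top : v2 = n - 1 := by
        by_contra hcon
        have hv2le : v2 ≤ n - 2 := by omega
        set d : Fin n := π.symm ⟨n - 1, by omega⟩ with hddef
        have hπd : (π d : ℕ) = n - 1 := by rw [hddef, π.apply_symm_apply]
        have hdne1 : d ≠ i1 := fun h => by rw [h] at hπd; omega
        have hdne2 : d ≠ i2 := fun h => by rw [h] at hπd; omega
        have hdv : (d : ℕ) = n - 1 := by
          have := nonexc d hdne1 hdne2; omega
        by_cases hsub : v2 + 1 ≤ n - 2
        · set c : Fin n := π.symm ⟨v2 + 1, by omega⟩ with hcdef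
          have hπc : (π c : ℕ) = v2 + 1 := by rw [hcdef, π.apply_symm_apply]
          have hcne1 : c ≠ i1 := fun h => by rw [h] at hπc; omega
          have hcne2 : c ≠ i2 := fun h => by rw [h] at hπc; omega
          have hcv : v2 + 1 ≤ (c : ℕ) := by have := nonexc c hcne1 hcne2; omega
          have hcd : (c : ℕ) < (d : ℕ) := by
            have : (c : ℕ) ≠ (d : ℕ) := fun h => by
              have : c = d := Fin.ext h
              rw [this] at hπc; omega
            omega
          have hbn : (i2 : ℕ) + 1 < n := by omega
          set b : Fin n := ⟨(i2 : ℕ) + 1, hbn⟩ with hbdef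
          have hbv : (b : ℕ) = (i2 : ℕ) + 1 := rfl
          have hbne1 : b ≠ i1 := fun h => by
            have := congrArg Fin.val h; rw [hbv] at this; omega
          have hbne2 : b ≠ i2 := fun h => by
            have := congrArg Fin.val h; rw [hbv] at this; omega
          have hπb : (π b : ℕ) ≤ (i2 : ℕ) + 1 := nonexc b hbne1 hbne2
          have hπbv : (π b : ℕ) ≠ v2 := fun h => hbne2 (π.injective (Fin.ext h))
          exact h2134 i2 b c d (Fin.lt_def.mpr (by omega)) (Fin.lt_def.mpr (by omega))
            (Fin.lt_def.mpr (by omega))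
            ⟨Fin.lt_def.mpr (by omega), Fin.lt_def.mpr (by omega), Fin.lt_def.mpr (by omega)⟩
        · have hv2eq : v2 = n - 2 := by omega
          have hbn : (i1 : ℕ) + 1 < n := by omega
          set b : Fin n := ⟨(i1 : ℕ) + 1, hbn⟩ with hbdef
          have hbv : (b : ℕ) = (i1 : ℕ) + 1 := rfl
          have hbne1 : b ≠ i1 := fun h => by
            have := congrArg Fin.val h; rw [hbv] at this; omega
          have hbne2 : b ≠ i2 := fun h => by
            have := congrArg Fin.val h; rw [hbv] at this; omega
          have hπb : (π b : ℕ) ≤ (i1 : ℕ) + 1 := nonexc b hbne1 hbne2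
          have hπbv : (π b : ℕ) ≠ v1 := fun h => hbne1 (π.injective (Fin.ext h))
          exact h2134 i1 b i2 d (Fin.lt_def.mpr (by omega)) (Fin.lt_def.mpr (by omega))
            (Fin.lt_def.mpr (by omega))
            ⟨Fin.lt_def.mpr (by omega), Fin.lt_def.mpr (by omega), Fin.lt_def.mpr (by omega)⟩
      -- v1 >= n - 3
      have hv1big : n ≤ v1 + 3 := by
        by_contra hcon
        push_neg at hcon
        set c : Fin n := π.symm ⟨v1 + 1, by omega⟩ with hcdef
        set d : Fin n := π.symm ⟨v1 + 2, by omega⟩ with hddef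
        have hπc : (π c : ℕ) = v1 + 1 := by rw [hcdef, π.apply_symm_apply]
        have hπd : (π d : ℕ) = v1 + 2 := by rw [hddef, π.apply_symm_apply]
        have hcne1 : c ≠ i1 := fun h => by rw [h] at hπc; omega
        have hcne2 : c ≠ i2 := fun h => by rw [h] at hπc; omega
        have hdne1 : d ≠ i1 := fun h => by rw [h] at hπd; omega
        have hdne2 : d ≠ i2 := fun h => by rw [h] at hπd; omega
        have hcv : v1 + 1 ≤ (c : ℕ) := by have := nonexc c hcne1 hcne2; omega
        have hdv : v1 + 2 ≤ (d : ℕ) := by have := nonexc d hdne1 hdne2; omega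
        have hcd : (c : ℕ) < (d : ℕ) := by
          rcases lt_trichotomy (c : ℕ) (d : ℕ) with h | h | h
          · exact h
          · exfalso; have : c = d := Fin.ext h
            rw [this] at hπc; omega
          · exfalso
            have := nonexc_mono π h321 d c (Fin.lt_def.mpr h) (by omega) (by omega)
            omega
        have hbn : (i1 : ℕ) + 1 < n := by omega
        set b : Fin n := ⟨(i1 : ℕ) + 1, hbn⟩ with hbdef
        have hbv : (b : ℕ) = (i1 : ℕ) + 1 := rfl
        have hbne1 : b ≠ i1 := fun h => by
          have := congrArg Fin.val h; rw [hbv] at this; omega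
        have hbne2 : b ≠ i2 := fun h => by
          have := congrArg Fin.val h; rw [hbv] at this; omega
        have hπb : (π b : ℕ) ≤ (i1 : ℕ) + 1 := nonexc b hbne1 hbne2
        have hπbv : (π b : ℕ) ≠ v1 := fun h => hbne1 (π.injective (Fin.ext h))
        exact h2134 i1 b c d (Fin.lt_def.mpr (by omega)) (Fin.lt_def.mpr (by omega))
          (Fin.lt_def.mpr (by omega))
          ⟨Fin.lt_def.mpr (by omega), Fin.lt_def.mpr (by omega), Fin.lt_def.mpr (by omega)⟩
      have hvD : validD n (i1 : ℕ) v1 (i2 : ℕ) :=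
        ⟨by omega, by omega, by omega, by omega, hi1⟩
      -- fill-in
      have fill : ∀ m, ∀ hm : m < n, (π ⟨m, hm⟩ : ℕ) = EDg n (i1 : ℕ) v1 (i2 : ℕ) m := by
        intro m
        induction m using Nat.strong_induction_on with
        | _ m IH =>
          intro hm
          by_cases hmi1 : m = (i1 : ℕ)
          · subst hmi1
            rw [EDg_at1 hvD hm]
          · by_cases hmi2 : m = (i2 : ℕ)
            · subst hmi2
              rw [EDg_at2 hvD hm, Fin.eta]
              omega
            · have hjne1 : (⟨m, hm⟩ : Fin n) ≠ i1 := fun h => hmi1 (congrArg Fin.val h)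
              have hjne2 : (⟨m, hm⟩ : Fin n) ≠ i2 := fun h => hmi2 (congrArg Fin.val h)
              have hπj : (π ⟨m, hm⟩ : ℕ) ≤ m := nonexc _ hjne1 hjne2
              have hE := EDg_facts hvD hm hmi1 hmi2
              have hge : EDg n (i1 : ℕ) v1 (i2 : ℕ) m ≤ (π ⟨m, hm⟩ : ℕ) := by
                by_contra hcon
                push_neg at hcon
                set u : ℕ := (π ⟨m, hm⟩ : ℕ) with hudef
                have hune1 : u ≠ v1 := fun h => hjne1 (π.injective (Fin.ext h))
                have hune2 : u ≠ n - 1 := by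
                  intro h
                  exact hjne2 (π.injective (Fin.ext (by omega)))
                have hkm : EDIg n (i1 : ℕ) v1 (i2 : ℕ) u < m :=
                  EDIg_lt_m hvD hm hmi1 hmi2 hcon hune1 hune2
                have hun : u < n := by omega
                have hk : EDg n (i1 : ℕ) v1 (i2 : ℕ) (EDIg n (i1 : ℕ) v1 (i2 : ℕ) u) = u :=
                  EDg_EDIg n _ v1 _ u hun
                have hkn : EDIg n (i1 : ℕ) v1 (i2 : ℕ) u < n := EDIg_lt n _ v1 _ u hun
                have hIH := IH _ hkm hkn
                rw [hk] at hIH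
                have h5 := π.injective (Fin.ext (hIH.trans hudef))
                rw [Fin.mk.injEq] at h5
                omega
              rcases eq_or_lt_of_le hge with h | h
              · exact h.symm
              · exfalso
                set e : ℕ := EDg n (i1 : ℕ) v1 (i2 : ℕ) m with hedef
                have hen : e < n := by omega
                set q : Fin n := π.symm ⟨e, hen⟩ with hqdef
                have hπq : (π q : ℕ) = e := by rw [hqdef, π.apply_symm_apply]
                have hqne : q ≠ ⟨m, hm⟩ := fun hqe => by rw [hqe] at hπq; omega
                have hqv : (q : ℕ) ≠ m := fun hq => hqne (Fin.ext hq)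
                rcases lt_or_gt_of_ne hqv with hq | hq
                · have hIH := IH _ hq q.isLt
                  rw [Fin.eta] at hIH
                  have hBe : EDg n (i1 : ℕ) v1 (i2 : ℕ) (q : ℕ) = e := by omega
                  have e1 := EDIg_EDg n (i1 : ℕ) v1 (i2 : ℕ) (q : ℕ) q.isLt
                  have e2 := EDIg_EDg n (i1 : ℕ) v1 (i2 : ℕ) m hm
                  rw [hBe] at e1
                  rw [← hedef] at e2
                  omega
                · have hqi1 : q ≠ i1 := fun hqe => by rw [hqe] at hπq; omega
                  have hqi2 : q ≠ i2 := by
                    intro hqe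
                    rw [hqe] at hπq
                    omega
                  have hπq2 : (π q : ℕ) ≤ q := nonexc q hqi1 hqi2
                  have := nonexc_mono π h321 ⟨m, hm⟩ q
                    (by simp only [Fin.lt_def, Fin.val_mk]; exact hq) hπj hπq2
                  omega
      refine ⟨(i1 : ℕ), v1, (i2 : ℕ), hvD, ?_⟩
      apply Equiv.ext; intro j
      apply Fin.ext
      have := fill j.val j.isLt
      rw [Fin.eta] at this
      rw [this, permD_val]

lemma sound_one {n : ℕ} :
    IsFishburn (1 : Equiv.Perm (Fin n)) ∧ Avoids (1 : Equiv.Perm (Fin n)) ![3, 2, 1] ∧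
      Avoids (1 : Equiv.Perm (Fin n)) ![2, 1, 3, 4] := by
  refine ⟨?_, ?_, ?_⟩
  · rw [isFishburn_iff]
    intro a a' b ha' hab ⟨c1, c2, c3⟩
    simp only [Equiv.Perm.one_apply] at c2
    rw [Fin.lt_def] at c2
    omega
  · rw [avoids321_iff]
    intro a b c hab hbc ⟨h1, h2⟩
    simp only [Equiv.Perm.one_apply] at h1 h2
    rw [Fin.lt_def] at hab hbc h1 h2
    omega
  · rw [avoids2134_iff]
    intro a b c d hab hbc hcd ⟨h1, h2, h3⟩
    simp only [Equiv.Perm.one_apply] at h1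
    rw [Fin.lt_def] at hab h1
    omega

lemma sound_S {n i v : ℕ} (hv : validS n i v) :
    IsFishburn (permS n i v) ∧ Avoids (permS n i v) ![3, 2, 1] ∧
      Avoids (permS n i v) ![2, 1, 3, 4] := by
  refine ⟨?_, ?_, ?_⟩
  · rw [isFishburn_iff]
    intro a a' b ha' hab ⟨c1, c2, c3⟩
    have g1 : ESg n i v (a : ℕ) < ESg n i v (a' : ℕ) := Fin.lt_def.mp c1
    rw [ha'] at g1
    have g2 : ESg n i v (b : ℕ) < ESg n i v (a : ℕ) := Fin.lt_def.mp c2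
    have g3 : ESg n i v (a : ℕ) = ESg n i v (b : ℕ) + 1 := c3
    exact ESg_fish n i v (a : ℕ) (b : ℕ) hv hab b.isLt ⟨g1, g2, g3⟩
  · rw [avoids321_iff]
    intro a b c hab hbc ⟨h1, h2⟩
    exact ESg_no321 n i v (a : ℕ) (b : ℕ) (c : ℕ) hv (Fin.lt_def.mp hab) (Fin.lt_def.mp hbc)
      c.isLt ⟨Fin.lt_def.mp h1, Fin.lt_def.mp h2⟩
  · rw [avoids2134_iff]
    intro a b c d hab hbc hcd ⟨h1, h2, h3⟩
    exact ESg_no2134 n i v (a : ℕ) (b : ℕ) (c : ℕ) (d : ℕ) hv (Fin.lt_def.mp hab)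
      (Fin.lt_def.mp hbc) (Fin.lt_def.mp hcd) d.isLt
      ⟨Fin.lt_def.mp h1, Fin.lt_def.mp h2, Fin.lt_def.mp h3⟩

lemma sound_D {n i1 v1 i2 : ℕ} (hv : validD n i1 v1 i2) :
    IsFishburn (permD n i1 v1 i2) ∧ Avoids (permD n i1 v1 i2) ![3, 2, 1] ∧
      Avoids (permD n i1 v1 i2) ![2, 1, 3, 4] := by
  refine ⟨?_, ?_, ?_⟩
  · rw [isFishburn_iff]
    intro a a' b ha' hab ⟨c1, c2, c3⟩
    have g1 : EDg n i1 v1 i2 (a : ℕ) < EDg n i1 v1 i2 (a' : ℕ) := Fin.lt_def.mp c1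
    rw [ha'] at g1
    have g2 : EDg n i1 v1 i2 (b : ℕ) < EDg n i1 v1 i2 (a : ℕ) := Fin.lt_def.mp c2
    have g3 : EDg n i1 v1 i2 (a : ℕ) = EDg n i1 v1 i2 (b : ℕ) + 1 := c3
    exact EDg_fish n i1 v1 i2 (a : ℕ) (b : ℕ) hv hab b.isLt ⟨g1, g2, g3⟩
  · rw [avoids321_iff]
    intro a b c hab hbc ⟨h1, h2⟩
    exact EDg_no321 n i1 v1 i2 (a : ℕ) (b : ℕ) (c : ℕ) hv (Fin.lt_def.mp hab)
      (Fin.lt_def.mp hbc) c.isLt ⟨Fin.lt_def.mp h1, Fin.lt_def.mp h2⟩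
  · rw [avoids2134_iff]
    intro a b c d hab hbc hcd ⟨h1, h2, h3⟩
    exact EDg_no2134 n i1 v1 i2 (a : ℕ) (b : ℕ) (c : ℕ) (d : ℕ) hv (Fin.lt_def.mp hab)
      (Fin.lt_def.mp hbc) (Fin.lt_def.mp hcd) d.isLt
      ⟨Fin.lt_def.mp h1, Fin.lt_def.mp h2, Fin.lt_def.mp h3⟩

open Finset

def PP (n : ℕ) : Finset (ℕ × ℕ) :=
  (Finset.range (n - 1)).biUnion (fun i2 => (Finset.range (i2 - 1)).image (fun i1 => (i1, i2)))

lemma mem_PP {n : ℕ} (p : ℕ × ℕ) : p ∈ PP n ↔ p.1 + 2 ≤ p.2 ∧ p.2 + 2 ≤ n := by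
  obtain ⟨i1, i2⟩ := p
  simp only [PP, Finset.mem_biUnion, Finset.mem_range, Finset.mem_image, Prod.mk.injEq]
  constructor
  · rintro ⟨a, ha, b, hb, rfl, rfl⟩
    omega
  · rintro ⟨h1, h2⟩
    exact ⟨i2, by omega, i1, by omega, rfl, rfl⟩

lemma sum_pred_mul_two : ∀ m : ℕ, (∑ i ∈ Finset.range m, (i - 1)) * 2 = (m - 1) * (m - 2)
  | 0 => by simp
  | (m + 1) => by
    rw [Finset.sum_range_succ, Nat.add_mul, sum_pred_mul_two m]
    rcases m with - | k
    · simp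
    · rcases k with - | l
      · simp
      · show (l + 1) * l + (l + 1) * 2 = (l + 2) * (l + 1)
        ring

lemma card_PP_mul_two {n : ℕ} : (PP n).card * 2 = (n - 2) * (n - 3) := by
  rw [PP, Finset.card_biUnion]
  · have : ∀ i2 ∈ Finset.range (n - 1),
        ((Finset.range (i2 - 1)).image (fun i1 => (i1, i2))).card = i2 - 1 := by
      intro i2 _
      rw [Finset.card_image_of_injective _ (fun a b h => (Prod.mk.injEq _ _ _ _).mp h |>.1)]
      exact Finset.card_range _
    rw [Finset.sum_congr rfl this]
    have h := sum_pred_mul_two (n - 1)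
    have : n - 1 - 1 = n - 2 := by omega
    rw [this] at h
    have : n - 1 - 2 = n - 3 := by omega
    rw [this] at h
    exact h
  · intro x _ y _ hxy
    unfold Function.onFun
    rw [Finset.disjoint_left]
    rintro p hp hq
    rw [Finset.mem_image] at hp hq
    obtain ⟨a, _, rfl⟩ := hp
    obtain ⟨b, _, hb⟩ := hq
    exact hxy ((Prod.mk.injEq _ _ _ _).mp hb).2.symm

def PSf (n : ℕ) : Finset (ℕ × ℕ) :=
  (Finset.range (n - 1)).image (fun i => (i, n - 1)) ∪
  (Finset.range (n - 2)).image (fun i => (i, n - 2))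

lemma mem_PSf {n : ℕ} (hn : 2 ≤ n) (p : ℕ × ℕ) : p ∈ PSf n ↔ validS n p.1 p.2 := by
  obtain ⟨i, v⟩ := p
  simp only [PSf, Finset.mem_union, Finset.mem_image, Finset.mem_range, Prod.mk.injEq, validS]
  constructor
  · rintro (⟨a, ha, rfl, rfl⟩ | ⟨a, ha, rfl, rfl⟩) <;> omega
  · rintro ⟨h1, h2, h3⟩
    by_cases hv : v = n - 1
    · exact Or.inl ⟨i, by omega, rfl, by omega⟩
    · exact Or.inr ⟨i, by omega, rfl, by omega⟩

lemma card_PSf {n : ℕ} (hn : 2 ≤ n) : (PSf n).card = (n - 1) + (n - 2) := by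
  rw [PSf, Finset.card_union_of_disjoint, Finset.card_image_of_injective,
    Finset.card_image_of_injective, Finset.card_range, Finset.card_range]
  · exact fun a b h => ((Prod.mk.injEq _ _ _ _).mp h).1
  · exact fun a b h => ((Prod.mk.injEq _ _ _ _).mp h).1
  · rw [Finset.disjoint_left]
    rintro p hp hq
    rw [Finset.mem_image] at hp hq
    obtain ⟨a, _, rfl⟩ := hp
    obtain ⟨b, _, hb⟩ := hq
    have := ((Prod.mk.injEq _ _ _ _).mp hb).2
    omega

def PDf (n : ℕ) : Finset (ℕ × ℕ × ℕ) :=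
  (PP n).image (fun p => (p.1, n - 3, p.2)) ∪ (PP n).image (fun p => (p.1, n - 2, p.2))

lemma mem_PDf {n : ℕ} (q : ℕ × ℕ × ℕ) : q ∈ PDf n ↔ validD n q.1 q.2.1 q.2.2 := by
  obtain ⟨i1, v1, i2⟩ := q
  simp only [PDf, Finset.mem_union, Finset.mem_image, Prod.mk.injEq, validD]
  constructor
  · rintro (⟨⟨a, b⟩, hp, h1, h2, h3⟩ | ⟨⟨a, b⟩, hp, h1, h2, h3⟩) <;>
      (rw [mem_PP] at hp; simp only at h1 h2 h3; subst h1; subst h2; subst h3; omega)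
  · rintro ⟨h1, h2, h3, h4, h5⟩
    by_cases hv : v1 = n - 3
    · exact Or.inl ⟨(i1, i2), (mem_PP _).mpr ⟨h1, h2⟩, rfl, by omega, rfl⟩
    · exact Or.inr ⟨(i1, i2), (mem_PP _).mpr ⟨h1, h2⟩, rfl, by omega, rfl⟩

lemma card_PDf {n : ℕ} : (PDf n).card = (n - 2) * (n - 3) := by
  have hinj : ∀ c : ℕ, Function.Injective (fun p : ℕ × ℕ => (p.1, c, p.2)) := by
    intro c a b h
    have h1 := ((Prod.mk.injEq _ _ _ _).mp h).1
    have h2 := (((Prod.mk.injEq _ _ _ _).mp ((Prod.mk.injEq _ _ _ _).mp h).2)).2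
    exact Prod.ext h1 h2
  rw [PDf, Finset.card_union_of_disjoint, Finset.card_image_of_injective _ (hinj _),
    Finset.card_image_of_injective _ (hinj _), ← card_PP_mul_two]
  · ring
  · rw [Finset.disjoint_left]
    rintro q hq1 hq2
    rw [Finset.mem_image] at hq1 hq2
    obtain ⟨a, ha, rfl⟩ := hq1
    obtain ⟨b, hb, hbe⟩ := hq2
    rw [mem_PP] at ha
    have := (((Prod.mk.injEq _ _ _ _).mp ((Prod.mk.injEq _ _ _ _).mp hbe).2)).1
    omega

open Finset

lemma perm_key {n : ℕ} {σ τ : Equiv.Perm (Fin n)} (he : σ = τ) (j : ℕ) (hj : j < n) :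
    ((σ ⟨j, hj⟩ : Fin n) : ℕ) = ((τ ⟨j, hj⟩ : Fin n) : ℕ) := by rw [he]

lemma permS_inj {n i v i' v' : ℕ} (h : validS n i v) (h' : validS n i' v')
    (he : permS n i v = permS n i' v') : i = i' ∧ v = v' := by
  have hc := h; obtain ⟨a1, a2, a3⟩ := hc
  have hi : i < n := by omega
  have k1 : ESg n i v i = ESg n i' v' i := perm_key he i hi
  rw [ESg_at h hi] at k1
  have hii' : i = i' := by
    by_contra hne
    have := ESg_facts h' hi hne
    omega
  subst hii'
  rw [ESg_at h' hi] at k1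
  exact ⟨rfl, k1⟩

lemma permD_inj {n i1 v1 i2 i1' v1' i2' : ℕ} (h : validD n i1 v1 i2) (h' : validD n i1' v1' i2')
    (he : permD n i1 v1 i2 = permD n i1' v1' i2') : i1 = i1' ∧ v1 = v1' ∧ i2 = i2' := by
  have hc := h; obtain ⟨a1, a2, a3, a4, a5⟩ := hc
  have hc' := h'; obtain ⟨b1, b2, b3, b4, b5⟩ := hc'
  have hi1 : i1 < n := by omega
  have hi2 : i2 < n := by omega
  have k1 : EDg n i1 v1 i2 i1 = EDg n i1' v1' i2' i1 := perm_key he i1 hi1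
  rw [EDg_at1 h hi1] at k1
  have hii' : i1 = i1' := by
    by_contra hne
    by_cases hne2 : i1 = i2'
    · rw [hne2, EDg_at2 h' (by omega)] at k1; omega
    · have := EDg_facts h' hi1 hne hne2; omega
  subst hii'
  rw [EDg_at1 h' hi1] at k1
  have k2 : EDg n i1 v1 i2 i2 = EDg n i1 v1' i2' i2 := perm_key he i2 hi2
  rw [EDg_at2 h hi2] at k2
  have hjj' : i2 = i2' := by
    by_contra hne
    have hne1 : i2 ≠ i1 := by omega
    have := EDg_facts h' hi2 hne1 hne
    omega
  exact ⟨rfl, k1, hjj'⟩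

lemma permS_ne_one {n i v : ℕ} (h : validS n i v) : permS n i v ≠ 1 := by
  intro he
  have hc := h; obtain ⟨a1, a2, a3⟩ := hc
  have hi : i < n := by omega
  have k1 : ESg n i v i = i := by simpa [permS_val] using perm_key he i hi
  rw [ESg_at h hi] at k1
  omega

lemma permD_ne_one {n i1 v1 i2 : ℕ} (h : validD n i1 v1 i2) : permD n i1 v1 i2 ≠ 1 := by
  intro he
  have hc := h; obtain ⟨a1, a2, a3, a4, a5⟩ := hc
  have hi : i1 < n := by omega
  have k1 : EDg n i1 v1 i2 i1 = i1 := by simpa [permD_val] using perm_key he i1 hi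
  rw [EDg_at1 h hi] at k1
  omega

lemma permS_ne_permD {n i v i1 v1 i2 : ℕ} (h : validS n i v) (h' : validD n i1 v1 i2) :
    permS n i v ≠ permD n i1 v1 i2 := by
  intro he
  have hc := h; obtain ⟨a1, a2, a3⟩ := hc
  have hc' := h'; obtain ⟨b1, b2, b3, b4, b5⟩ := hc'
  have hi1 : i1 < n := by omega
  have hi2 : i2 < n := by omega
  have k1 : ESg n i v i1 = EDg n i1 v1 i2 i1 := perm_key he i1 hi1
  have k2 : ESg n i v i2 = EDg n i1 v1 i2 i2 := perm_key he i2 hi2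
  rw [EDg_at1 h' hi1] at k1
  rw [EDg_at2 h' hi2] at k2
  have e1 : i = i1 := by
    by_contra hne
    have := ESg_facts h hi1 (fun hh => hne hh.symm)
    omega
  have e2 : i = i2 := by
    by_contra hne
    have := ESg_facts h hi2 (fun hh => hne hh.symm)
    omega
  omega

def Ffin (n : ℕ) : Finset (Equiv.Perm (Fin n)) :=
  ({1} ∪ (PSf n).image (fun p => permS n p.1 p.2)) ∪
    (PDf n).image (fun q => permD n q.1 q.2.1 q.2.2)

lemma card_Ffin {n : ℕ} (hn : 2 ≤ n) :
    (Ffin n).card = 1 + ((n - 1) + (n - 2)) + (n - 2) * (n - 3) := by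
  rw [Ffin]
  rw [Finset.card_union_of_disjoint, Finset.card_union_of_disjoint]
  · rw [Finset.card_singleton, Finset.card_image_of_injOn, Finset.card_image_of_injOn,
      card_PSf hn, card_PDf]
    · intro p hp q hq he
      rw [Finset.mem_coe, mem_PDf] at hp hq
      obtain ⟨e1, e2, e3⟩ := permD_inj hp hq he
      exact Prod.ext e1 (Prod.ext e2 e3)
    · intro p hp q hq he
      rw [Finset.mem_coe, mem_PSf hn] at hp hq
      obtain ⟨e1, e2⟩ := permS_inj hp hq he
      exact Prod.ext e1 e2
  · rw [Finset.disjoint_left]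
    intro x hx hy
    rw [Finset.mem_singleton] at hx
    rw [Finset.mem_image] at hy
    obtain ⟨p, hp, he⟩ := hy
    rw [mem_PSf hn] at hp
    exact permS_ne_one hp (he.trans hx)
  · rw [Finset.disjoint_left]
    intro x hx hy
    rw [Finset.mem_image] at hy
    obtain ⟨q, hq, he⟩ := hy
    rw [mem_PDf] at hq
    rw [Finset.mem_union] at hx
    rcases hx with hx | hx
    · rw [Finset.mem_singleton] at hx
      subst hx
      exact permD_ne_one hq he
    · rw [Finset.mem_image] at hx
      obtain ⟨p, hp, hpe⟩ := hx
      rw [mem_PSf hn] at hp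
      exact permS_ne_permD hp hq (hpe.trans he.symm)

lemma set_eq (n : ℕ) (hn : 2 ≤ n) :
    {π : Equiv.Perm (Fin n) | IsFishburn π ∧ Avoids π ![3, 2, 1] ∧ Avoids π ![2, 1, 3, 4]} =
      ↑(Ffin n) := by
  ext π
  simp only [Set.mem_setOf_eq, Finset.coe_union, Set.mem_union, Finset.coe_image,
    Set.mem_image, Finset.mem_coe, Finset.mem_singleton, Finset.coe_singleton,
    Set.mem_singleton_iff, Ffin]
  constructor
  · rintro ⟨hf, ha1, ha2⟩
    rw [avoids321_iff] at ha1
    rw [avoids2134_iff] at ha2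
    rcases completeness n hn π ha1 ha2 hf with h | ⟨i, v, hv, rfl⟩ | ⟨i1, v1, i2, hv, rfl⟩
    · exact Or.inl (Or.inl h)
    · exact Or.inl (Or.inr ⟨(i, v), (mem_PSf hn _).mpr hv, rfl⟩)
    · exact Or.inr ⟨(i1, v1, i2), (mem_PDf _).mpr hv, rfl⟩
  · rintro ((rfl | ⟨p, hp, rfl⟩) | ⟨q, hq, rfl⟩)
    · exact sound_one
    · exact sound_S ((mem_PSf hn _).mp hp)
    · exact sound_D ((mem_PDf _).mp hq)

theorem fishburn_321_2134 (n : ℕ) (hn : 2 ≤ n) :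
    ({π : Equiv.Perm (Fin n) | IsFishburn π ∧ Avoids π ![3, 2, 1] ∧ Avoids π ![2, 1, 3, 4]}.ncard : ℤ) = n ^ 2 - 3 * n + 4 := by
  rw [set_eq n hn, Set.ncard_coe_finset, card_Ffin hn]
  obtain ⟨m, rfl⟩ : ∃ m, n = m + 2 := ⟨n - 2, by omega⟩
  show ((1 + ((m + 1) + m) + m * (m - 1) : ℕ) : ℤ) = _
  rcases m with - | k
  · norm_num
  · show ((1 + ((k + 2) + (k + 1)) + (k + 1) * k : ℕ) : ℤ) = ((k + 3 : ℕ) : ℤ) ^ 2 - 3 * ((k + 3 : ℕ) : ℤ) + 4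
    push_cast
    ring
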